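/- Periodicity of sign-changing equilibria: let f be C² satisfying f(0)=0, f'(0)=1, u f''(u)<0 for u≠0, and limsup f(u)/u < 0, and let φ ∈ C²([0,π]) solve φ'' + λ f(φ) = 0 with φ(0)=φ(π)=0 having exactly 2j−1 interior zeros (j ≥ 1). Then φ is π/j-periodic on [0,π]: φ(x + π/j) = φ(x) for all x ∈ [0, π − π/j]. -/

import Mathlib

open Real Set

lemma ode_unique (f : ℝ → ℝ) (hf : ContDiff ℝ 2 f) (lam : ℝ)
    (a b t₀ : ℝ) (ht₀ : t₀ ∈ Icc a b)
    (ψ₁ ψ₂ : ℝ → ℝ) (h₁ : ContDiff ℝ 2 ψ₁) (h₂ : ContDiff ℝ 2 ψ₂)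
    (e₁ : ∀ x ∈ Icc a b, deriv (deriv ψ₁) x = -(lam * f (ψ₁ x)))
    (e₂ : ∀ x ∈ Icc a b, deriv (deriv ψ₂) x = -(lam * f (ψ₂ x)))
    (hval : ψ₁ t₀ = ψ₂ t₀) (hder : deriv ψ₁ t₀ = deriv ψ₂ t₀) :
    ∀ x ∈ Icc a b, ψ₁ x = ψ₂ x ∧ deriv ψ₁ x = deriv ψ₂ x := by
  -- the vector solutions
  set F₁ : ℝ → ℝ × ℝ := fun x => (ψ₁ x, deriv ψ₁ x) with hF₁
  set F₂ : ℝ → ℝ × ℝ := fun x => (ψ₂ x, deriv ψ₂ x) with hF₂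
  have hc₁ : Continuous F₁ := (h₁.continuous).prodMk (h₁.continuous_deriv one_le_two)
  have hc₂ : Continuous F₂ := (h₂.continuous).prodMk (h₂.continuous_deriv one_le_two)
  -- bound on trajectories
  obtain ⟨R₁, hR₁⟩ : ∃ R, ∀ x ∈ Icc a b, ‖F₁ x‖ ≤ R :=
    (isCompact_Icc.exists_bound_of_continuousOn hc₁.continuousOn)
  obtain ⟨R₂, hR₂⟩ : ∃ R, ∀ x ∈ Icc a b, ‖F₂ x‖ ≤ R :=
    (isCompact_Icc.exists_bound_of_continuousOn hc₂.continuousOn)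
  set R : ℝ := max (max R₁ R₂) 0 with hRdef
  have hR0 : 0 ≤ R := le_max_right _ _
  have hmem₁ : ∀ x ∈ Icc a b, F₁ x ∈ Metric.closedBall (0 : ℝ × ℝ) R := by
    intro x hx
    rw [Metric.mem_closedBall, dist_zero_right]
    exact (hR₁ x hx).trans ((le_max_left _ _).trans (le_max_left _ _))
  have hmem₂ : ∀ x ∈ Icc a b, F₂ x ∈ Metric.closedBall (0 : ℝ × ℝ) R := by
    intro x hx
    rw [Metric.mem_closedBall, dist_zero_right]
    exact (hR₂ x hx).trans ((le_max_right _ _).trans (le_max_left _ _))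
  -- Lipschitz bound for f on [-R, R]
  obtain ⟨C, hC⟩ : ∃ C, ∀ u ∈ Icc (-R) R, ‖deriv f u‖ ≤ C :=
    isCompact_Icc.exists_bound_of_continuousOn
      ((hf.continuous_deriv one_le_two).continuousOn)
  have hC0 : 0 ≤ C := le_trans (norm_nonneg _) (hC 0 (by constructor <;> linarith))
  have hlipf : LipschitzOnWith (Real.toNNReal C) f (Icc (-R) R) := by
    apply (convex_Icc _ _).lipschitzOnWith_of_nnnorm_deriv_le
      (fun x _ => (hf.differentiable two_ne_zero).differentiableAt)
      (fun x hx => ?_)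
    rw [← NNReal.coe_le_coe, coe_nnnorm, Real.coe_toNNReal _ hC0]
    exact hC x hx
  -- the vector field
  set v : ℝ → ℝ × ℝ → ℝ × ℝ := fun _ p => (p.2, -(lam * f p.1)) with hv
  set K : NNReal := max 1 (Real.toNNReal (|lam| * C)) with hK
  have hvlip : ∀ t : ℝ, LipschitzOnWith K (v t)
      (Metric.closedBall (0 : ℝ × ℝ) R) := by
    intro t
    rw [lipschitzOnWith_iff_dist_le_mul]
    intro p hp q hq
    have hp1 : p.1 ∈ Icc (-R) R := by
      rw [Metric.mem_closedBall, dist_zero_right] at hp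
      have h' : ‖p.1‖ ≤ R := (norm_fst_le p).trans hp
      rw [Real.norm_eq_abs] at h'
      have := abs_le.mp h'
      exact ⟨this.1, this.2⟩
    have hq1 : q.1 ∈ Icc (-R) R := by
      rw [Metric.mem_closedBall, dist_zero_right] at hq
      have h' : ‖q.1‖ ≤ R := (norm_fst_le q).trans hq
      rw [Real.norm_eq_abs] at h'
      have := abs_le.mp h'
      exact ⟨this.1, this.2⟩
    have h1 : dist (v t p).1 (v t q).1 ≤ (K : ℝ) * dist p q := by
      have : dist p.2 q.2 ≤ dist p q := by
        rw [Prod.dist_eq]; exact le_max_right _ _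
      have hK1 : (1 : ℝ) ≤ (K : ℝ) := by
        rw [hK]; push_cast; exact le_max_left _ _
      nlinarith [dist_nonneg (x := p) (y := q)]
    have h2 : dist (v t p).2 (v t q).2 ≤ (K : ℝ) * dist p q := by
      have hlf := (lipschitzOnWith_iff_dist_le_mul.mp hlipf) p.1 hp1 q.1 hq1
      have : dist (v t p).2 (v t q).2 = |lam| * dist (f q.1) (f p.1) := by
        simp only [hv]
        rw [Real.dist_eq, Real.dist_eq, ← abs_mul]
        congr 1
        ring
      rw [this, dist_comm (f q.1)]
      have hfst : dist p.1 q.1 ≤ dist p q := by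
        rw [Prod.dist_eq]; exact le_max_left _ _
      have hKC : |lam| * C ≤ (K : ℝ) := by
        rw [hK]; push_cast
        exact le_trans (Real.le_coe_toNNReal _) (le_max_right _ _)
      have h' : dist (f p.1) (f q.1) ≤ C * dist p q := by
        calc dist (f p.1) (f q.1) ≤ C * dist p.1 q.1 := by
              have := hlf
              rwa [Real.coe_toNNReal _ hC0] at this
          _ ≤ C * dist p q := by nlinarith [dist_nonneg (x := p.1) (y := q.1)]
      calc |lam| * dist (f p.1) (f q.1) ≤ |lam| * (C * dist p q) := by
            apply mul_le_mul_of_nonneg_left h' (abs_nonneg _)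
        _ = (|lam| * C) * dist p q := by ring
        _ ≤ (K : ℝ) * dist p q := by
            apply mul_le_mul_of_nonneg_right hKC dist_nonneg
    calc dist (v t p) (v t q) = max (dist (v t p).1 (v t q).1) (dist (v t p).2 (v t q).2) :=
          Prod.dist_eq
      _ ≤ (K : ℝ) * dist p q := max_le h1 h2
  -- the derivatives
  have hd₁ : ∀ x ∈ Icc a b, HasDerivAt F₁ (v x (F₁ x)) x := by
    intro x hx
    have ha : HasDerivAt ψ₁ (deriv ψ₁ x) x :=
      ((h₁.differentiable two_ne_zero).differentiableAt).hasDerivAt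
    have hb : HasDerivAt (deriv ψ₁) (deriv (deriv ψ₁) x) x := by
      have : Differentiable ℝ (deriv ψ₁) := by
        have := (contDiff_succ_iff_deriv (n := 1)).mp (by exact_mod_cast h₁)
        exact this.2.2.differentiable one_ne_zero
      exact this.differentiableAt.hasDerivAt
    rw [e₁ x hx] at hb
    exact ha.prodMk hb
  have hd₂ : ∀ x ∈ Icc a b, HasDerivAt F₂ (v x (F₂ x)) x := by
    intro x hx
    have ha : HasDerivAt ψ₂ (deriv ψ₂ x) x :=
      ((h₂.differentiable two_ne_zero).differentiableAt).hasDerivAt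
    have hb : HasDerivAt (deriv ψ₂) (deriv (deriv ψ₂) x) x := by
      have : Differentiable ℝ (deriv ψ₂) := by
        have := (contDiff_succ_iff_deriv (n := 1)).mp (by exact_mod_cast h₂)
        exact this.2.2.differentiable one_ne_zero
      exact this.differentiableAt.hasDerivAt
    rw [e₂ x hx] at hb
    exact ha.prodMk hb
  -- initial condition
  have hinit : F₁ t₀ = F₂ t₀ := by
    simp only [hF₁, hF₂, hval, hder]
  -- apply uniqueness on [t₀, b] and [a, t₀]
  have key : ∀ x ∈ Icc a b, F₁ x = F₂ x := by
    intro x hx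
    rcases le_total x t₀ with hle | hle
    · have := ODE_solution_unique_of_mem_Icc_left (v := v)
        (s := fun _ => Metric.closedBall (0 : ℝ × ℝ) R) (K := K) (fun t _ => hvlip t)
        (f := F₁) (g := F₂) (a := a) (b := t₀)
        (hc₁.continuousOn)
        (fun t ht => (hd₁ t ⟨le_of_lt ht.1, le_trans ht.2 ht₀.2⟩).hasDerivWithinAt)
        (fun t ht => hmem₁ t ⟨le_of_lt ht.1, le_trans ht.2 ht₀.2⟩)
        (hc₂.continuousOn)
        (fun t ht => (hd₂ t ⟨le_of_lt ht.1, le_trans ht.2 ht₀.2⟩).hasDerivWithinAt)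
        (fun t ht => hmem₂ t ⟨le_of_lt ht.1, le_trans ht.2 ht₀.2⟩)
        hinit
      exact this ⟨hx.1, hle⟩
    · have := ODE_solution_unique_of_mem_Icc_right (v := v)
        (s := fun _ => Metric.closedBall (0 : ℝ × ℝ) R) (K := K) (fun t _ => hvlip t)
        (f := F₁) (g := F₂) (a := t₀) (b := b)
        (hc₁.continuousOn)
        (fun t ht => (hd₁ t ⟨le_trans ht₀.1 ht.1, le_of_lt ht.2⟩).hasDerivWithinAt)
        (fun t ht => hmem₁ t ⟨le_trans ht₀.1 ht.1, le_of_lt ht.2⟩)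
        (hc₂.continuousOn)
        (fun t ht => (hd₂ t ⟨le_trans ht₀.1 ht.1, le_of_lt ht.2⟩).hasDerivWithinAt)
        (fun t ht => hmem₂ t ⟨le_trans ht₀.1 ht.1, le_of_lt ht.2⟩)
        hinit
      exact this ⟨hle, hx.2⟩
  intro x hx
  have := key x hx
  exact ⟨congrArg Prod.fst this, congrArg Prod.snd this⟩

lemma energy_const (f : ℝ → ℝ) (hf : Continuous f) (lam : ℝ) (φ : ℝ → ℝ)
    (hφ : ContDiff ℝ 2 φ) (a b : ℝ)
    (heq : ∀ x ∈ Icc a b, deriv (deriv φ) x = -(lam * f (φ x))) :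
    ∀ x ∈ Icc a b, (deriv φ x)^2 + 2*lam*(∫ t in (0:ℝ)..(φ x), f t)
      = (deriv φ a)^2 + 2*lam*(∫ t in (0:ℝ)..(φ a), f t) := by
  set G : ℝ → ℝ := fun x => (deriv φ x)^2 + 2*lam*(∫ t in (0:ℝ)..(φ x), f t) with hG
  have hdφ : Differentiable ℝ φ := hφ.differentiable two_ne_zero
  have hdφ' : Differentiable ℝ (deriv φ) := by
    have := (contDiff_succ_iff_deriv (n := 1)).mp (by exact_mod_cast hφ)
    exact this.2.2.differentiable one_ne_zero
  have hDG : ∀ x, HasDerivAt G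
      (2 * deriv φ x * deriv (deriv φ) x + 2*lam*(f (φ x) * deriv φ x)) x := by
    intro x
    have h1 : HasDerivAt (fun y => (deriv φ y)^2) (2 * deriv φ x * deriv (deriv φ) x) x := by
      have := ((hdφ'.differentiableAt (x := x)).hasDerivAt).fun_pow 2
      simpa [mul_comm, mul_assoc, mul_left_comm] using this
    have h2 : HasDerivAt (fun u => ∫ t in (0:ℝ)..u, f t) (f (φ x)) (φ x) := by
      exact intervalIntegral.integral_hasDerivAt_right
        (hf.intervalIntegrable _ _) (hf.stronglyMeasurableAtFilter _ _) hf.continuousAt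
    have h3 : HasDerivAt (fun y => ∫ t in (0:ℝ)..(φ y), f t)
        (f (φ x) * deriv φ x) x := h2.comp x (hdφ.differentiableAt.hasDerivAt)
    exact h1.add ((h3.const_mul (2*lam)))
  have hcont : ContinuousOn G (Icc a b) := by
    apply Continuous.continuousOn
    exact Differentiable.continuous (fun x => (hDG x).differentiableAt)
  have hconst : ∀ x ∈ Icc a b, G x = G a := by
    apply constant_of_has_deriv_right_zero hcont
    intro x hx
    have h0 : (2 * deriv φ x * deriv (deriv φ) x + 2*lam*(f (φ x) * deriv φ x)) = 0 := by
      rw [heq x ⟨hx.1, le_of_lt hx.2⟩]; ring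
    exact (h0 ▸ (hDG x)).hasDerivWithinAt
  exact hconst

theorem stmt18 (f : ℝ → ℝ) (hf : ContDiff ℝ 2 f) (hf0 : f 0 = 0)
    (hf'0 : deriv f 0 = 1)
    (hconc : ∀ u : ℝ, u ≠ 0 → u * deriv (deriv f) u < 0)
    (hdiss : ∃ β : ℝ, β < 0 ∧ ∃ R : ℝ, 0 < R ∧ ∀ u : ℝ, R ≤ |u| → f u / u ≤ β)
    (lam : ℝ) (hlam : 0 < lam) (j : ℕ) (hj : 1 ≤ j)
    (φ : ℝ → ℝ) (hφ : ContDiff ℝ 2 φ)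
    (heq : ∀ x ∈ Set.Icc (0:ℝ) π, deriv (deriv φ) x + lam * f (φ x) = 0)
    (h0 : φ 0 = 0) (hπ : φ π = 0)
    (hfin : {x ∈ Set.Ioo (0:ℝ) π | φ x = 0}.Finite)
    (hcard : {x ∈ Set.Ioo (0:ℝ) π | φ x = 0}.ncard = 2 * j - 1) :
    ∀ x : ℝ, 0 ≤ x → x ≤ π - π / j → φ (x + π / j) = φ x := by
  have hπ0 : (0:ℝ) < π := Real.pi_pos
  have heq' : ∀ x ∈ Set.Icc (0:ℝ) π, deriv (deriv φ) x = -(lam * f (φ x)) := by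
    intro x hx; have := heq x hx; linarith
  -- the translation property
  have trans : ∀ z w : ℝ, z ∈ Icc (0:ℝ) π → w ∈ Icc (0:ℝ) π → φ z = 0 → φ w = 0 →
      deriv φ z = deriv φ w →
      ∀ t : ℝ, 0 ≤ t → z + t ≤ π → w + t ≤ π →
        φ (z + t) = φ (w + t) ∧ deriv φ (z + t) = deriv φ (w + t) := by
    have key : ∀ z w : ℝ, z ≤ w → z ∈ Icc (0:ℝ) π → w ∈ Icc (0:ℝ) π → φ z = 0 → φ w = 0 →
        deriv φ z = deriv φ w →
        ∀ t : ℝ, 0 ≤ t → w + t ≤ π →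
          φ (z + t) = φ (w + t) ∧ deriv φ (z + t) = deriv φ (w + t) := by
      intro z w hzw hz hw hz0 hw0 hσ
      set c : ℝ := w - z with hc
      have hc0 : 0 ≤ c := by simp [hc]; linarith
      set ψ : ℝ → ℝ := fun x => φ (x + c) with hψdef
      have hψ : ContDiff ℝ 2 ψ := hφ.comp ((contDiff_id.add contDiff_const))
      have hψd : ∀ x : ℝ, deriv ψ x = deriv φ (x + c) := fun x => deriv_comp_add_const φ c x
      have hψdd : ∀ x : ℝ, deriv (deriv ψ) x = deriv (deriv φ) (x + c) := by
        intro x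
        have : deriv ψ = fun x => deriv φ (x + c) := funext hψd
        rw [this]
        exact deriv_comp_add_const (deriv φ) c x
      have huniq := ode_unique f hf lam 0 (π - c) z ⟨hz.1, by simp only [hc]; linarith [hw.2]⟩ φ ψ hφ hψ
        (fun x hx => heq' x ⟨hx.1, by cases hx; linarith⟩)
        (fun x hx => by
          rw [hψdd x]
          exact heq' (x + c) ⟨by cases hx; linarith, by cases hx; linarith⟩)
        (by simpa [hψdef, hc] using (hz0.trans hw0.symm))
        (by rw [hψd]; simpa [hc] using hσ)
      intro t ht hwt
      have hzt : z + t ∈ Icc (0:ℝ) (π - c) := ⟨by linarith [hz.1], by simp [hc] at *; linarith⟩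
      obtain ⟨hv, hd⟩ := huniq (z + t) hzt
      constructor
      · rw [hv]; simp only [hψdef]; congr 1; simp [hc]; ring
      · rw [hd, hψd]; congr 1; simp [hc]; ring
    intro z w hz hw hz0 hw0 hσ t ht hzt hwt
    rcases le_total z w with h | h
    · exact key z w h hz hw hz0 hw0 hσ t ht hwt
    · obtain ⟨h1, h2⟩ := key w z h hw hz hw0 hz0 hσ.symm t ht hzt
      exact ⟨h1.symm, h2.symm⟩
  -- zeros are simple
  have simple : ∀ z ∈ Icc (0:ℝ) π, φ z = 0 → deriv φ z ≠ 0 := by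
    intro z hz hz0 hder
    have huniq := ode_unique f hf lam 0 π z hz φ (fun _ => 0) hφ contDiff_const
      heq'
      (fun x _ => by simp [hf0])
      (by simpa using hz0)
      (by simpa using hder)
    have : Set.Ioo (0:ℝ) π ⊆ {x ∈ Set.Ioo (0:ℝ) π | φ x = 0} := by
      intro x hx
      exact ⟨hx, (huniq x ⟨le_of_lt hx.1, le_of_lt hx.2⟩).1⟩
    exact (Set.Ioo_infinite hπ0) (hfin.subset this)
  -- energy at zeros
  have energy : ∀ z ∈ Icc (0:ℝ) π, φ z = 0 →
      deriv φ z = deriv φ 0 ∨ deriv φ z = -(deriv φ 0) := by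
    intro z hz hz0
    have h := energy_const f (hf.continuous) lam φ hφ 0 π heq' z hz
    rw [hz0, h0] at h
    simp only [intervalIntegral.integral_same] at h
    have h2 : deriv φ z * deriv φ z = deriv φ 0 * deriv φ 0 := by nlinarith
    exact mul_self_eq_mul_self_iff.mp h2
  -- the zero set
  set Zin : Set ℝ := {x ∈ Set.Ioo (0:ℝ) π | φ x = 0} with hZin
  set Z : Set ℝ := insert 0 (insert π Zin) with hZdef
  have hZfin : Z.Finite := ((hfin.insert π).insert 0)
  have hπZin : π ∉ Zin := fun h => (lt_irrefl π h.1.2)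
  have h0Zins : (0:ℝ) ∉ insert π Zin := by
    intro h
    rcases h with h | h
    · exact Real.pi_ne_zero h.symm
    · exact lt_irrefl 0 h.1.1
  have hZcard : Z.ncard = 2 * j + 1 := by
    rw [hZdef, Set.ncard_insert_of_notMem h0Zins (hfin.insert π),
      Set.ncard_insert_of_notMem hπZin hfin, hcard]
    omega
  have hZchar : ∀ x, x ∈ Z ↔ (x ∈ Icc (0:ℝ) π ∧ φ x = 0) := by
    intro x
    constructor
    · intro hx
      rcases hx with rfl | hx'
      · exact ⟨⟨le_refl 0, le_of_lt hπ0⟩, h0⟩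
      rcases hx' with rfl | hx''
      · exact ⟨⟨le_of_lt hπ0, le_refl π⟩, hπ⟩
      · exact ⟨⟨le_of_lt hx''.1.1, le_of_lt hx''.1.2⟩, hx''.2⟩
    · rintro ⟨hx1, hx2⟩
      rcases eq_or_lt_of_le hx1.1 with h | h
      · left; exact h.symm
      rcases eq_or_lt_of_le hx1.2 with h' | h'
      · right; left; exact h'
      · right; right; exact ⟨⟨h, h'⟩, hx2⟩
  set Zf : Finset ℝ := hZfin.toFinset with hZf
  have hZfcard : Zf.card = 2 * j + 1 := by
    rw [hZf, ← Set.ncard_eq_toFinset_card _ hZfin, hZcard]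
  set e := Zf.orderIsoOfFin hZfcard with he
  set z : ℕ → ℝ := fun k => (e ⟨min k (2*j), by omega⟩ : ℝ) with hzdef
  have hzmem : ∀ k, z k ∈ Z := by
    intro k
    have h1 : (e ⟨min k (2*j), by omega⟩ : ℝ) ∈ Zf := (e ⟨min k (2*j), by omega⟩).2
    exact hZfin.mem_toFinset.mp h1
  have hzIcc : ∀ k, z k ∈ Icc (0:ℝ) π ∧ φ (z k) = 0 := fun k => (hZchar _).mp (hzmem k)
  have hzmono : ∀ k l : ℕ, k ≤ 2*j → l ≤ 2*j → k < l → z k < z l := by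
    intro k l hk hl hkl
    have h1 : (⟨min k (2*j), by omega⟩ : Fin (2*j+1)) < ⟨min l (2*j), by omega⟩ := by
      rw [Fin.mk_lt_mk]; omega
    exact e.strictMono h1
  have hzle : ∀ k l : ℕ, k ≤ 2*j → l ≤ 2*j → k ≤ l → z k ≤ z l := by
    intro k l hk hl hkl
    rcases eq_or_lt_of_le hkl with rfl | h
    · exact le_refl _
    · exact le_of_lt (hzmono k l hk hl h)
  have hzsurj : ∀ x ∈ Z, ∃ k ≤ 2*j, z k = x := by
    intro x hx
    have hx' : x ∈ Zf := hZfin.mem_toFinset.mpr hx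
    set i := e.symm ⟨x, hx'⟩ with hi
    refine ⟨i.1, by omega, ?_⟩
    have hmin : min i.1 (2*j) = i.1 := min_eq_left (by omega)
    have h1 : (⟨min i.1 (2*j), by omega⟩ : Fin (2*j+1)) = i := by
      apply Fin.ext; simp [hmin]
    rw [hzdef]
    show ((e ⟨min i.1 (2*j), by omega⟩ : Zf) : ℝ) = x
    rw [h1, hi, OrderIso.apply_symm_apply]
  have hz0eq : z 0 = 0 := by
    have h0Z : (0:ℝ) ∈ Z := Set.mem_insert _ _
    obtain ⟨k, hk, hk0⟩ := hzsurj 0 h0Z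
    have h1 : z 0 ≤ z k := hzle 0 k (by omega) hk (Nat.zero_le k)
    exact le_antisymm (hk0 ▸ h1) (hzIcc 0).1.1
  have hz2jeq : z (2*j) = π := by
    have hπZ : π ∈ Z := Set.mem_insert_of_mem _ (Set.mem_insert _ _)
    obtain ⟨k, hk, hkπ⟩ := hzsurj π hπZ
    have h1 : z k ≤ z (2*j) := hzle k (2*j) hk (le_refl _) hk
    exact le_antisymm (hzIcc (2*j)).1.2 (hkπ ▸ h1)
  have hgap : ∀ k, k < 2*j → ∀ x, z k < x → x < z (k+1) → φ x = 0 → False := by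
    intro k hk x hx1 hx2 hx0
    have hxIcc : x ∈ Icc (0:ℝ) π :=
      ⟨le_trans (hzIcc k).1.1 (le_of_lt hx1), le_trans (le_of_lt hx2) (hzIcc (k+1)).1.2⟩
    have hxZ : x ∈ Z := (hZchar x).mpr ⟨hxIcc, hx0⟩
    obtain ⟨i, hi, rfl⟩ := hzsurj x hxZ
    rcases le_or_gt i k with h | h
    · exact absurd (hzle i k hi (by omega) h) (not_le.mpr hx1)
    · exact absurd (hzle (k+1) i (by omega) hi h) (not_le.mpr hx2)
  -- slope sign lemmas
  have hDφ : ∀ x : ℝ, HasDerivAt φ (deriv φ x) x :=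
    fun x => ((hφ.differentiable two_ne_zero).differentiableAt).hasDerivAt
  have slopeR : ∀ u w : ℝ, u < w → φ u = 0 → (∀ x ∈ Ioo u w, 0 < φ x) → 0 ≤ deriv φ u := by
    intro u w huw hu0 hpos
    have htd : Filter.Tendsto (slope φ u) (nhdsWithin u (Ioi u)) (nhds (deriv φ u)) :=
      (hasDerivAt_iff_tendsto_slope.mp (hDφ u)).mono_left
        (nhdsWithin_mono _ (fun x hx => ne_of_gt hx))
    apply ge_of_tendsto htd
    filter_upwards [Ioo_mem_nhdsGT_of_mem ⟨le_refl _, huw⟩] with x hx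
    rw [slope_def_field, hu0, sub_zero]
    exact le_of_lt (div_pos (hpos x hx) (by linarith [hx.1]))
  have slopeL : ∀ u w : ℝ, u < w → φ w = 0 → (∀ x ∈ Ioo u w, 0 < φ x) → deriv φ w ≤ 0 := by
    intro u w huw hw0 hpos
    have htd : Filter.Tendsto (slope φ w) (nhdsWithin w (Iio w)) (nhds (deriv φ w)) :=
      (hasDerivAt_iff_tendsto_slope.mp (hDφ w)).mono_left
        (nhdsWithin_mono _ (fun x hx => ne_of_lt hx))
    apply le_of_tendsto htd
    filter_upwards [Ioo_mem_nhdsLT_of_mem ⟨huw, le_refl _⟩] with x hx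
    rw [slope_def_field, hw0, sub_zero]
    exact le_of_lt (div_neg_of_pos_of_neg (hpos x hx) (by linarith [hx.2]))
  have slopeRn : ∀ u w : ℝ, u < w → φ u = 0 → (∀ x ∈ Ioo u w, φ x < 0) → deriv φ u ≤ 0 := by
    intro u w huw hu0 hneg
    have htd : Filter.Tendsto (slope φ u) (nhdsWithin u (Ioi u)) (nhds (deriv φ u)) :=
      (hasDerivAt_iff_tendsto_slope.mp (hDφ u)).mono_left
        (nhdsWithin_mono _ (fun x hx => ne_of_gt hx))
    apply le_of_tendsto htd
    filter_upwards [Ioo_mem_nhdsGT_of_mem ⟨le_refl _, huw⟩] with x hx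
    rw [slope_def_field, hu0, sub_zero]
    exact le_of_lt (div_neg_of_neg_of_pos (hneg x hx) (by linarith [hx.1]))
  have slopeLn : ∀ u w : ℝ, u < w → φ w = 0 → (∀ x ∈ Ioo u w, φ x < 0) → 0 ≤ deriv φ w := by
    intro u w huw hw0 hneg
    have htd : Filter.Tendsto (slope φ w) (nhdsWithin w (Iio w)) (nhds (deriv φ w)) :=
      (hasDerivAt_iff_tendsto_slope.mp (hDφ w)).mono_left
        (nhdsWithin_mono _ (fun x hx => ne_of_lt hx))
    apply ge_of_tendsto htd
    filter_upwards [Ioo_mem_nhdsLT_of_mem ⟨huw, le_refl _⟩] with x hx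
    rw [slope_def_field, hw0, sub_zero]
    have hd : x - w < 0 := by linarith [hx.2]
    exact le_of_lt (div_pos_of_neg_of_neg (hneg x hx) hd)
  -- alternation of derivative signs at consecutive zeros
  have ALT : ∀ k, k < 2*j → deriv φ (z (k+1)) = -(deriv φ (z k)) := by
    intro k hk
    have hzk := hzIcc k
    have hzk1 := hzIcc (k+1)
    have hlt : z k < z (k+1) := hzmono k (k+1) (by omega) (by omega) (lt_add_one k)
    have hne : ∀ x ∈ Ioo (z k) (z (k+1)), φ x ≠ 0 := fun x hx h => hgap k hk x hx.1 hx.2 h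
    have hmid : (z k + z (k+1))/2 ∈ Ioo (z k) (z (k+1)) := ⟨by linarith, by linarith⟩
    have hsgn : (∀ x ∈ Ioo (z k) (z (k+1)), 0 < φ x) ∨ (∀ x ∈ Ioo (z k) (z (k+1)), φ x < 0) := by
      rcases lt_or_gt_of_ne (hne _ hmid) with hneg | hpos
      · right
        intro x hx
        by_contra hle
        push_neg at hle
        have hxpos : 0 < φ x := lt_of_le_of_ne hle (Ne.symm (hne x hx))
        have hsub : uIcc ((z k + z (k+1))/2) x ⊆ Ioo (z k) (z (k+1)) :=
          (ordConnected_Ioo).uIcc_subset hmid hx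
        have h0mem : (0:ℝ) ∈ uIcc (φ ((z k + z (k+1))/2)) (φ x) :=
          Set.mem_uIcc.mpr (Or.inl ⟨le_of_lt hneg, le_of_lt hxpos⟩)
        obtain ⟨y, hy, hy0⟩ := intermediate_value_uIcc (hφ.continuous.continuousOn) h0mem
        exact hne y (hsub hy) hy0
      · left
        intro x hx
        by_contra hle
        push_neg at hle
        have hxneg : φ x < 0 := lt_of_le_of_ne hle (hne x hx)
        have hsub : uIcc ((z k + z (k+1))/2) x ⊆ Ioo (z k) (z (k+1)) :=
          (ordConnected_Ioo).uIcc_subset hmid hx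
        have h0mem : (0:ℝ) ∈ uIcc (φ ((z k + z (k+1))/2)) (φ x) :=
          Set.mem_uIcc.mpr (Or.inr ⟨le_of_lt hxneg, le_of_lt hpos⟩)
        obtain ⟨y, hy, hy0⟩ := intermediate_value_uIcc (hφ.continuous.continuousOn) h0mem
        exact hne y (hsub hy) hy0
    have hsq : deriv φ (z (k+1)) = deriv φ (z k) ∨ deriv φ (z (k+1)) = -(deriv φ (z k)) := by
      rcases energy (z k) hzk.1 hzk.2 with h1 | h1 <;>
        rcases energy (z (k+1)) hzk1.1 hzk1.2 with h2 | h2 <;>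
        rw [h1, h2] <;> simp
    have hnz : deriv φ (z k) ≠ 0 := simple (z k) hzk.1 hzk.2
    rcases hsq with hs | hs
    · exfalso
      rcases hsgn with hp | hn
      · have h1 : 0 ≤ deriv φ (z k) := slopeR (z k) (z (k+1)) hlt hzk.2 hp
        have h2 : deriv φ (z (k+1)) ≤ 0 := slopeL (z k) (z (k+1)) hlt hzk1.2 hp
        rw [hs] at h2
        exact hnz (le_antisymm h2 h1)
      · have h1 : deriv φ (z k) ≤ 0 := slopeRn (z k) (z (k+1)) hlt hzk.2 hn
        have h2 : 0 ≤ deriv φ (z (k+1)) := slopeLn (z k) (z (k+1)) hlt hzk1.2 hn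
        rw [hs] at h2
        exact hnz (le_antisymm h1 h2)
    · exact hs
  -- equal gaps for zeros with equal derivative
  have GAP : ∀ k m, k < 2*j → m < 2*j → deriv φ (z k) = deriv φ (z m) →
      z (m+1) - z m ≤ z (k+1) - z k := by
    intro k m hk hm hσ
    by_contra hcon
    push_neg at hcon
    set g : ℝ := z (k+1) - z k with hg
    have hg0 : 0 < g := by
      have := hzmono k (k+1) (by omega) (by omega) (lt_add_one k)
      simp only [hg]; linarith
    have h1 : z m + g < z (m+1) := by simp only [hg] at hcon ⊢; linarith
    have h2 : z m + g ≤ π := le_trans (le_of_lt h1) (hzIcc (m+1)).1.2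
    have h3 : z k + g ≤ π := by
      have := (hzIcc (k+1)).1.2
      simp only [hg]; linarith
    obtain ⟨hv, _⟩ := trans (z k) (z m) (hzIcc k).1 (hzIcc m).1 (hzIcc k).2 (hzIcc m).2 hσ
      g (le_of_lt hg0) h3 h2
    have hzero : φ (z m + g) = 0 := by
      rw [← hv]
      have hkk : z k + g = z (k+1) := by simp only [hg]; ring
      rw [hkk]
      exact (hzIcc (k+1)).2
    exact hgap m hm (z m + g) (by linarith) h1 hzero
  have GAPeq : ∀ k m, k < 2*j → m < 2*j → deriv φ (z k) = deriv φ (z m) →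
      z (k+1) - z k = z (m+1) - z m := fun k m hk hm hσ =>
    le_antisymm (GAP m k hm hk hσ.symm) (GAP k m hk hm hσ)
  -- derivative parity
  have POW : ∀ k, k ≤ 2*j → deriv φ (z k) = ((-1:ℝ))^k * deriv φ (z 0) := by
    intro k
    induction k with
    | zero => intro _; simp
    | succ n ih =>
      intro h
      rw [ALT n (by omega), ih (by omega), pow_succ]
      ring
  -- all pairs of consecutive gaps have the same total
  have PAIR : ∀ i, i < j → z (2*i+2) - z (2*i) = z 2 - z 0 := by
    intro i hi
    have e0 : deriv φ (z 0) = deriv φ (z (2*i)) := by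
      rw [POW (2*i) (by omega), POW 0 (by omega)]
      simp [pow_mul]
    have e1 : deriv φ (z 1) = deriv φ (z (2*i+1)) := by
      rw [POW (2*i+1) (by omega), POW 1 (by omega)]
      simp [pow_succ, pow_mul]
    have g0 := GAPeq 0 (2*i) (by omega) (by omega) e0
    have g1 := GAPeq 1 (2*i+1) (by omega) (by omega) e1
    have hidx1 : 0 + 1 = 1 := rfl
    have hidx2 : 1 + 1 = 2 := rfl
    have hidx3 : 2*i + 1 + 1 = 2*i + 2 := rfl
    rw [hidx1] at g0
    rw [hidx2, hidx3] at g1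
    linarith
  -- telescoping
  have TEL : ∀ n : ℕ, n ≤ j → z (2*n) - z 0 = n * (z 2 - z 0) := by
    intro n
    induction n with
    | zero => intro _; simp
    | succ m ih =>
      intro h
      have hp := PAIR m (by omega)
      have ihm := ih (by omega)
      have hidx : 2*(m+1) = 2*m+2 := by ring
      rw [hidx]
      push_cast
      linarith
  have hTEL := TEL j (le_refl j)
  rw [hz2jeq, hz0eq, sub_zero, sub_zero] at hTEL
  have hjne : (j:ℝ) ≠ 0 := Nat.cast_ne_zero.mpr (by omega)
  have hz2 : z 2 = π / j := by
    field_simp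
    linarith
  -- conclusion
  intro x hx1 hx2
  have hπj0 : 0 < π / j := div_pos hπ0 (by positivity)
  have hσ2 : deriv φ (z 0) = deriv φ (z 2) := by
    rw [POW 2 (by omega)]
    norm_num
  obtain ⟨hv, _⟩ := trans (z 0) (z 2) (hzIcc 0).1 (hzIcc 2).1 (hzIcc 0).2 (hzIcc 2).2 hσ2
    x hx1 (by rw [hz0eq]; linarith) (by rw [hz2]; linarith)
  rw [hz0eq, hz2, zero_add] at hv
  rw [add_comm x (π / j)]
  exact hv.symm
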